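/- Suppose the verifier achieves R_V = 0 but soundness fails: there exist x₀ and z₀ with c(x₀,z₀) = 0 and v(x₀,z₀) > 0. Assume the sneaky translator τ' is a pointwise best response to v under reward r(v(x,z), 1-c(x,z)), with r(v₁,1) > r(v₂,0) for all v₁,v₂ and r(·,1) strictly increasing. Then we derive a contradiction: since R_V=0 forces v(x₀,τ'(x₀)) = c(x₀,τ'(x₀)), either c(x₀,τ'(x₀)) = 1 (in which case switching to z₀ gives 1-c = 1 and strictly larger reward r(v(x₀,z₀),1) > r(v(x₀,τ'(x₀)),0)), or c(x₀,τ'(x₀)) = 0 and v(x₀,τ'(x₀)) = 0 (in which case r(v(x₀,z₀),1) > r(0,1) by strict monotonicity since v(x₀,z₀) > 0). Hence no such configuration exists, i.e., R_V = 0 together with τ' being a best response implies soundness. -/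
import Mathlib

/-- if the verifier achieves `R_V = 0` (i.e. it agrees with the
correctness indicator on the outputs of both translators) and the sneaky translator
is a pointwise best response under a reward with strict separation and strict
monotonicity in the aligned branch, then soundness must hold: there is no `x₀, z₀`
with `c(x₀,z₀) = 0` and `v(x₀,z₀) > 0`. -/
theorem zero_loss_best_response_implies_soundness
    {X Z : Type*} [Fintype X] [Nonempty X]
    (c v : X → Z → ℝ) (τ τ' : X → Z) (r : ℝ → ℝ → ℝ)
    (hc : ∀ x z, c x z = 0 ∨ c x z = 1)
    (hv : ∀ x z, v x z ∈ Set.Icc (0:ℝ) 1)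
    -- R_V = 0: the verifier agrees with c on all outputs of τ and τ'
    (hRV : ∀ x, v x (τ x) = c x (τ x) ∧ v x (τ' x) = c x (τ' x))
    -- τ' is a pointwise best response
    (hbr : ∀ x, ∀ z : Z,
      r (v x z) (1 - c x z) ≤ r (v x (τ' x)) (1 - c x (τ' x)))
    (hr_sep : ∀ v₁ v₂ : ℝ, v₁ ∈ Set.Icc (0:ℝ) 1 → v₂ ∈ Set.Icc (0:ℝ) 1 →
      r v₁ 1 > r v₂ 0)
    (hr_mono : ∀ v₁ v₂ : ℝ, v₁ ∈ Set.Icc (0:ℝ) 1 → v₂ ∈ Set.Icc (0:ℝ) 1 →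
      v₁ > v₂ → r v₁ 1 > r v₂ 1) :
    ∀ x : X, ∀ z : Z, c x z = 0 → v x z = 0 := by
  intro x z hcz
  by_contra hvz
  have hvpos : v x z > 0 := lt_of_le_of_ne (hv x z).1 (Ne.symm hvz)
  have hbrz := hbr x z
  rw [hcz] at hbrz
  simp only [sub_zero] at hbrz
  have hagree := (hRV x).2
  rcases hc x (τ' x) with h0 | h1
  · rw [h0] at hbrz hagree
    simp only [sub_zero] at hbrz
    have := hr_mono (v x z) (v x (τ' x)) (hv x z) (hv x (τ' x)) (by rw [hagree]; exact hvpos)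
    linarith
  · rw [h1] at hbrz
    norm_num at hbrz
    have := hr_sep (v x z) (v x (τ' x)) (hv x z) (hv x (τ' x))
    linarith
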